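/- Let (z,w) be an admissible pair (z(x) - w(p) ≥ (β² - |x-p|²)/(2β) for all x ∈ Ω, p ∈ T) and let P̃ : Ω → T be a measurable map such that z(x) - w(P̃(x)) = (β² - |x - P̃(x)|²)/(2β) for almost every x ∈ Ω, and such that ∫_Ω h(P̃(x)) I(x) dx = ∫_T h(p) L(p) dp for all continuous h on T. Then for every admissible pair (ζ,ω), F(ζ,ω) ≥ F(z,w), where F(ζ,ω) = ∫_Ω ζ I - ∫_T ω L. -/

import Mathlib

open MeasureTheory

lemma tietze_aux {n : ℕ} {s : Set (EuclideanSpace ℝ (Fin n))} (hs : IsClosed s)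
    {f : EuclideanSpace ℝ (Fin n) → ℝ} (hf : ContinuousOn f s) :
    ∃ g : EuclideanSpace ℝ (Fin n) → ℝ, Continuous g ∧ ∀ x ∈ s, g x = f x := by
  obtain ⟨g, hg⟩ := ContinuousMap.exists_restrict_eq (Y := ℝ) hs
    ⟨s.restrict f, hf.restrict⟩
  refine ⟨g, g.continuous, fun x hx => ?_⟩
  have := congrFun (congrArg ContinuousMap.toFun hg) ⟨x, hx⟩
  exact this

theorem stmt_13 {n : ℕ} (Ω T : Set (EuclideanSpace ℝ (Fin n)))
    (hΩc : IsCompact Ω) (hΩne : Ω.Nonempty) (hTc : IsCompact T) (hTne : T.Nonempty)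
    (β : ℝ) (hβ : 0 < β)
    (I L : EuclideanSpace ℝ (Fin n) → ℝ)
    (hI0 : ∀ x ∈ Ω, 0 ≤ I x) (hL0 : ∀ p ∈ T, 0 ≤ L p)
    (hIint : IntegrableOn I Ω) (hLint : IntegrableOn L T)
    (hmass : ∫ x in Ω, I x = ∫ p in T, L p)
    (z w : EuclideanSpace ℝ (Fin n) → ℝ)
    (hzc : ContinuousOn z Ω) (hwc : ContinuousOn w T)
    (hadm : ∀ x ∈ Ω, ∀ p ∈ T, z x - w p ≥ (β ^ 2 - ‖x - p‖ ^ 2) / (2 * β))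
    (Pt : EuclideanSpace ℝ (Fin n) → EuclideanSpace ℝ (Fin n))
    (hPtm : Measurable Pt) (hPtT : ∀ x ∈ Ω, Pt x ∈ T)
    (heq : ∀ᵐ x ∂(volume.restrict Ω),
      z x - w (Pt x) = (β ^ 2 - ‖x - Pt x‖ ^ 2) / (2 * β))
    (hplan : ∀ h : EuclideanSpace ℝ (Fin n) → ℝ, Continuous h →
      ∫ x in Ω, h (Pt x) * I x = ∫ p in T, h p * L p) :
    ∀ ζ ω : EuclideanSpace ℝ (Fin n) → ℝ, ContinuousOn ζ Ω → ContinuousOn ω T →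
      (∀ x ∈ Ω, ∀ p ∈ T, ζ x - ω p ≥ (β ^ 2 - ‖x - p‖ ^ 2) / (2 * β)) →
      ((∫ x in Ω, ζ x * I x) - ∫ p in T, ω p * L p) ≥
        ((∫ x in Ω, z x * I x) - ∫ p in T, w p * L p) := by
  intro ζ ω hζc hωc hadm'
  have hΩm : MeasurableSet Ω := hΩc.isClosed.measurableSet
  have hTm : MeasurableSet T := hTc.isClosed.measurableSet
  -- extend ω and w
  obtain ⟨ω', hω'c, hω'eq⟩ := tietze_aux hTc.isClosed hωc
  obtain ⟨w', hw'c, hw'eq⟩ := tietze_aux hTc.isClosed hwc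
  -- rewrite the T-integrals
  have hω : ∫ p in T, ω p * L p = ∫ x in Ω, ω' (Pt x) * I x := by
    rw [hplan ω' hω'c]
    exact setIntegral_congr_fun hTm (fun p hp => by rw [hω'eq p hp])
  have hw : ∫ p in T, w p * L p = ∫ x in Ω, w' (Pt x) * I x := by
    rw [hplan w' hw'c]
    exact setIntegral_congr_fun hTm (fun p hp => by rw [hw'eq p hp])
  rw [hω, hw]
  -- integrability facts
  have hmemΩ : ∀ᵐ x ∂(volume.restrict Ω), x ∈ Ω := ae_restrict_mem hΩm
  have int_of_cont : ∀ f : EuclideanSpace ℝ (Fin n) → ℝ, ContinuousOn f Ω →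
      IntegrableOn (fun x => f x * I x) Ω := by
    intro f hf
    obtain ⟨C, hC⟩ := hΩc.exists_bound_of_continuousOn hf
    exact hIint.bdd_mul (hf.aestronglyMeasurable hΩm)
      (hmemΩ.mono fun x hx => hC x hx)
  have int_of_comp : ∀ g : EuclideanSpace ℝ (Fin n) → ℝ, Continuous g →
      IntegrableOn (fun x => g (Pt x) * I x) Ω := by
    intro g hg
    obtain ⟨C, hC⟩ := hTc.exists_bound_of_continuousOn hg.continuousOn
    exact hIint.bdd_mul ((hg.measurable.comp hPtm).aestronglyMeasurable)
      (hmemΩ.mono fun x hx => hC _ (hPtT x hx))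
  have iζ := int_of_cont ζ hζc
  have iz := int_of_cont z hzc
  have iω := int_of_comp ω' hω'c
  have iw := int_of_comp w' hw'c
  rw [ge_iff_le, sub_le_sub_iff]
  rw [← integral_add iz iω, ← integral_add iζ iw]
  refine integral_mono_ae (iz.add iω) (iζ.add iw) ?_
  filter_upwards [hmemΩ, heq] with x hx hxeq
  have h1 : z x - w' (Pt x) ≤ ζ x - ω' (Pt x) := by
    rw [hw'eq _ (hPtT x hx), hω'eq _ (hPtT x hx), hxeq]
    exact hadm' x hx (Pt x) (hPtT x hx)
  have h2 : 0 ≤ I x := hI0 x hx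
  nlinarith [mul_le_mul_of_nonneg_right h1 h2]
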